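/- Let A be an abelian category with enough projectives and enough injectives, and let (C, F) be a cotorsion pair in A. Then the following are equivalent: (i) (C, F) is complete; (ii) for every object X there is a short exact sequence 0 → F' → C' → X → 0 with C' ∈ C and F' ∈ F; (iii) for every object X there is a short exact sequence 0 → X → F'' → C'' → 0 with F'' ∈ F and C'' ∈ C. -/
import Mathlib


open CategoryTheory

universe v u

variable {𝒜 : Type u} [Category.{v} 𝒜] [Abelian 𝒜]

/-- `Ext¹(X, Y) = 0`, expressed as: every short exact sequence `0 → Y → E → X → 0` splits. -/
def Ext1Zero (X Y : 𝒜) : Prop :=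
  ∀ (E : 𝒜) (i : Y ⟶ E) (p : E ⟶ X) (w : i ≫ p = 0),
    (ShortComplex.mk i p w).ShortExact → ∃ s : X ⟶ E, s ≫ p = 𝟙 X

/-- `(C, F)` is a cotorsion pair: `C = ⊥F` and `F = C⊥` with respect to `Ext¹`. -/
def IsCotorsionPair (C F : Set 𝒜) : Prop :=
  (∀ X : 𝒜, X ∈ C ↔ ∀ Y ∈ F, Ext1Zero X Y) ∧
  (∀ Y : 𝒜, Y ∈ F ↔ ∀ X ∈ C, Ext1Zero X Y)

/-- `X` admits a special right approximation `0 → F' → C' → X → 0` with `C' ∈ C`, `F' ∈ F`. -/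
def HasSpecialRightApprox (C F : Set 𝒜) (X : 𝒜) : Prop :=
  ∃ (Co Fo : 𝒜) (_ : Co ∈ C) (_ : Fo ∈ F) (i : Fo ⟶ Co) (p : Co ⟶ X) (w : i ≫ p = 0),
    (ShortComplex.mk i p w).ShortExact

/-- `X` admits a special left approximation `0 → X → F' → C' → 0` with `F' ∈ F`, `C' ∈ C`. -/
def HasSpecialLeftApprox (C F : Set 𝒜) (X : 𝒜) : Prop :=
  ∃ (Co Fo : 𝒜) (_ : Co ∈ C) (_ : Fo ∈ F) (i : X ⟶ Fo) (p : Fo ⟶ Co) (w : i ≫ p = 0),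
    (ShortComplex.mk i p w).ShortExact

/-- Completeness of a cotorsion pair. -/
def IsCompletePair (C F : Set 𝒜) : Prop :=
  ∀ X : 𝒜, HasSpecialRightApprox C F X ∧ HasSpecialLeftApprox C F X

/-- Closure under kernels of epimorphisms. -/
def ClosedUnderKernelsOfEpis (C : Set 𝒜) : Prop :=
  ∀ (K E Q : 𝒜) (i : K ⟶ E) (p : E ⟶ Q) (w : i ≫ p = 0),
    (ShortComplex.mk i p w).ShortExact → E ∈ C → Q ∈ C → K ∈ C

/-- Closure under cokernels of monomorphisms. -/
def ClosedUnderCokernelsOfMonos (F : Set 𝒜) : Prop :=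
  ∀ (K E Q : 𝒜) (i : K ⟶ E) (p : E ⟶ Q) (w : i ≫ p = 0),
    (ShortComplex.mk i p w).ShortExact → K ∈ F → E ∈ F → Q ∈ F

/-- `ExtVanish n X Y` means `Ext^{n+1}(X, Y) = 0`, via dimension shifting. -/
def ExtVanish : ℕ → 𝒜 → 𝒜 → Prop
  | 0, X, Y => Ext1Zero X Y
  | n + 1, X, Y => ∀ (K P : 𝒜) (i : K ⟶ P) (p : P ⟶ X) (w : i ≫ p = 0),
      (ShortComplex.mk i p w).ShortExact → Projective P → ExtVanish n K Y

section CotorsionAux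

open CategoryTheory.Limits CategoryTheory.ShortComplex

/-- `Ext¹(X, I) = 0` when `I` is injective. -/
lemma ext1Zero_of_injective (X Y : 𝒜) [Injective Y] : Ext1Zero X Y := by
  intro E i p w hse
  have := hse.mono_f
  have spl := ShortComplex.Splitting.ofExactOfRetraction (ShortComplex.mk i p w) hse.exact
    (Injective.factorThru (𝟙 Y) i) (Injective.comp_factorThru _ _) hse.epi_g
  exact ⟨spl.s, spl.s_g⟩

/-- `Ext¹(P, Y) = 0` when `P` is projective. -/
lemma ext1Zero_of_projective (X Y : 𝒜) [Projective X] : Ext1Zero X Y := by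
  intro E i p w hse
  have := hse.epi_g
  exact ⟨Projective.factorThru (𝟙 X) p, Projective.factorThru_comp _ _⟩

lemma ext1Zero_op {X Y : 𝒜} (h : Ext1Zero X Y) :
    Ext1Zero (Opposite.op Y) (Opposite.op X) := by
  intro E i p w hse
  have w' : p.unop ≫ i.unop = 0 := by
    rw [← unop_comp, w]; rfl
  have hse' : (ShortComplex.mk p.unop i.unop w').ShortExact := hse.unop
  obtain ⟨s, hs⟩ := h E.unop p.unop i.unop w' hse'
  have := hse'.mono_f
  have spl := ShortComplex.Splitting.ofExactOfSection _ hse'.exact s hs hse'.mono_f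
  refine ⟨spl.r.op, Quiver.Hom.unop_inj ?_⟩
  simpa using spl.f_r

lemma ext1Zero_unop {X Y : 𝒜} (h : Ext1Zero (Opposite.op Y) (Opposite.op X)) :
    Ext1Zero X Y := by
  intro E i p w hse
  have w' : p.op ≫ i.op = 0 := by
    rw [← op_comp, w]; rfl
  have hse' : (ShortComplex.mk p.op i.op w').ShortExact := hse.op
  obtain ⟨s, hs⟩ := h (Opposite.op E) p.op i.op w' hse'
  have hr : i ≫ s.unop = 𝟙 Y := by
    have := congrArg Quiver.Hom.unop hs
    simpa using this
  have := hse.mono_f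
  have spl := ShortComplex.Splitting.ofExactOfRetraction _ hse.exact s.unop hr hse.epi_g
  exact ⟨spl.s, spl.s_g⟩

/-- Pulling back a short exact sequence `0 → K → E → Q → 0` along `f : T ⟶ Q` gives a
short exact sequence `0 → K → E ×_Q T → T → 0`. -/
lemma pullback_shortExact {K E Q T : 𝒜} (i : K ⟶ E) (p : E ⟶ Q) (w : i ≫ p = 0)
    (hse : (ShortComplex.mk i p w).ShortExact) (f : T ⟶ Q) :
    (ShortComplex.mk (pullback.lift i 0 (by simp [w]) : K ⟶ pullback p f)
      (pullback.snd p f) (pullback.lift_snd _ _ _)).ShortExact := by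
  have := hse.mono_f
  have := hse.epi_g
  have wl : i ≫ p = (0 : K ⟶ T) ≫ f := by simp [w]
  have hmono : Mono (pullback.lift i (0 : K ⟶ T) wl : K ⟶ pullback p f) :=
    mono_of_mono_fac (pullback.lift_fst i 0 wl)
  have hker := KernelFork.IsLimit.ofι' (f := pullback.snd p f)
      (pullback.lift i 0 wl) (pullback.lift_snd _ _ _)
      (fun {A} z hz => by
        have hzp : (z ≫ pullback.fst p f) ≫ p = 0 := by
          rw [Category.assoc, pullback.condition, ← Category.assoc, hz, zero_comp]
        obtain ⟨l, hl⟩ := KernelFork.IsLimit.lift' hse.fIsKernel (z ≫ pullback.fst p f) hzp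
        simp only [Fork.ι_ofι] at hl
        refine ⟨l, ?_⟩
        apply pullback.hom_ext
        · simpa [pullback.lift_fst] using hl
        · simp [pullback.lift_snd, hz])
  exact ShortExact.mk' (ShortComplex.exact_of_f_is_kernel _ hker) hmono inferInstance

/-- Variant of `pullback_shortExact` for the first projection. -/
lemma pullback_shortExact' {K E Q T : 𝒜} (i : K ⟶ E) (p : E ⟶ Q) (w : i ≫ p = 0)
    (hse : (ShortComplex.mk i p w).ShortExact) (f : T ⟶ Q) :
    (ShortComplex.mk (pullback.lift 0 i (by simp [w]) : K ⟶ pullback f p)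
      (pullback.fst f p) (pullback.lift_fst _ _ _)).ShortExact := by
  have := hse.mono_f
  have := hse.epi_g
  have wl : (0 : K ⟶ T) ≫ f = i ≫ p := by simp [w]
  have hmono : Mono (pullback.lift (0 : K ⟶ T) i wl : K ⟶ pullback f p) :=
    mono_of_mono_fac (pullback.lift_snd 0 i wl)
  have hker := KernelFork.IsLimit.ofι' (f := pullback.fst f p)
      (pullback.lift 0 i wl) (pullback.lift_fst _ _ _)
      (fun {A} z hz => by
        have hzp : (z ≫ pullback.snd f p) ≫ p = 0 := by
          rw [Category.assoc, ← pullback.condition, ← Category.assoc, hz, zero_comp]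
        obtain ⟨l, hl⟩ := KernelFork.IsLimit.lift' hse.fIsKernel (z ≫ pullback.snd f p) hzp
        simp only [Fork.ι_ofι] at hl
        refine ⟨l, ?_⟩
        apply pullback.hom_ext
        · simp [pullback.lift_fst, hz]
        · simpa [pullback.lift_snd] using hl)
  exact ShortExact.mk' (ShortComplex.exact_of_f_is_kernel _ hker) hmono inferInstance

/-- Pushing out a short exact sequence `0 → K → E → Q → 0` along `f : K ⟶ T` gives a
short exact sequence `0 → T → E ⊔_K T → Q → 0`. -/
lemma pushout_shortExact {K E Q T : 𝒜} (i : K ⟶ E) (p : E ⟶ Q) (w : i ≫ p = 0)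
    (hse : (ShortComplex.mk i p w).ShortExact) (f : K ⟶ T) :
    (ShortComplex.mk (pushout.inr i f)
      (pushout.desc p 0 (by simp [w]) : pushout i f ⟶ Q)
      (pushout.inr_desc _ _ _)).ShortExact := by
  have := hse.mono_f
  have := hse.epi_g
  have wl : i ≫ p = f ≫ (0 : T ⟶ Q) := by simp [w]
  have hepi : Epi (pushout.desc p (0 : T ⟶ Q) wl : pushout i f ⟶ Q) :=
    epi_of_epi_fac (pushout.inl_desc p 0 wl)
  have hcoker := CokernelCofork.IsColimit.ofπ' (f := pushout.inr i f)
      (pushout.desc p 0 wl) (pushout.inr_desc _ _ _)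
      (fun {A} z hz => by
        have hzp : i ≫ (pushout.inl i f ≫ z) = 0 := by
          rw [← Category.assoc, pushout.condition, Category.assoc, hz, comp_zero]
        obtain ⟨l, hl⟩ := CokernelCofork.IsColimit.desc' hse.gIsCokernel
          (pushout.inl i f ≫ z) hzp
        simp only [Cofork.π_ofπ] at hl
        refine ⟨l, ?_⟩
        apply pushout.hom_ext
        · simpa [pushout.inl_desc_assoc] using hl
        · simp [pushout.inr_desc_assoc, hz])
  exact ShortExact.mk' (ShortComplex.exact_of_g_is_cokernel _ hcoker) inferInstance hepi

/-- Variant of `pushout_shortExact` for the first inclusion. -/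
lemma pushout_shortExact' {K E Q T : 𝒜} (i : K ⟶ E) (p : E ⟶ Q) (w : i ≫ p = 0)
    (hse : (ShortComplex.mk i p w).ShortExact) (f : K ⟶ T) :
    (ShortComplex.mk (pushout.inl f i)
      (pushout.desc 0 p (by simp [w]) : pushout f i ⟶ Q)
      (pushout.inl_desc _ _ _)).ShortExact := by
  have := hse.mono_f
  have := hse.epi_g
  have wl : f ≫ (0 : T ⟶ Q) = i ≫ p := by simp [w]
  have hepi : Epi (pushout.desc (0 : T ⟶ Q) p wl : pushout f i ⟶ Q) :=
    epi_of_epi_fac (pushout.inr_desc 0 p wl)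
  have hcoker := CokernelCofork.IsColimit.ofπ' (f := pushout.inl f i)
      (pushout.desc 0 p wl) (pushout.inl_desc _ _ _)
      (fun {A} z hz => by
        have hzp : i ≫ (pushout.inr f i ≫ z) = 0 := by
          rw [← Category.assoc, ← pushout.condition, Category.assoc, hz, comp_zero]
        obtain ⟨l, hl⟩ := CokernelCofork.IsColimit.desc' hse.gIsCokernel
          (pushout.inr f i ≫ z) hzp
        simp only [Cofork.π_ofπ] at hl
        refine ⟨l, ?_⟩
        apply pushout.hom_ext
        · simp [pushout.inl_desc_assoc, hz]
        · simpa [pushout.inr_desc_assoc] using hl)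
  exact ShortExact.mk' (ShortComplex.exact_of_g_is_cokernel _ hcoker) inferInstance hepi

/-- `Ext¹(X, -)`-vanishing is closed under extensions. -/
lemma extClosed_right {A Y B X : 𝒜} (a : A ⟶ Y) (b : Y ⟶ B) (w : a ≫ b = 0)
    (hse : (ShortComplex.mk a b w).ShortExact)
    (hA : Ext1Zero X A) (hB : Ext1Zero X B) : Ext1Zero X Y := by
  intro G j q wjq hjq
  have := hse.mono_f
  have := hse.epi_g
  have := hjq.mono_f
  have := hjq.epi_g
  -- push out `0 → Y → G → X → 0` along `b : Y ⟶ B`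
  have wq : j ≫ q = b ≫ (0 : B ⟶ X) := by simp [wjq]
  have seqB := pushout_shortExact j q wjq hjq b
  obtain ⟨s, hs⟩ := hB _ _ _ _ seqB
  -- `0 → A → G → pushout j b → 0` is short exact
  have hmono : Mono (a ≫ j) := mono_comp _ _
  have hepi : Epi (pushout.inl j b) := inferInstance
  have winl : (a ≫ j) ≫ pushout.inl j b = 0 := by
    rw [Category.assoc, pushout.condition, ← Category.assoc, w, zero_comp]
  have hker := KernelFork.IsLimit.ofι' (f := pushout.inl j b) (a ≫ j) winl
    (fun {W} z hz => by
      have hzq : z ≫ q = 0 := by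
        have h1 : q = pushout.inl j b ≫ pushout.desc q 0 wq :=
          (pushout.inl_desc _ _ _).symm
        rw [h1, ← Category.assoc, hz, zero_comp]
      obtain ⟨w₁, hw₁⟩ := KernelFork.IsLimit.lift' hjq.fIsKernel z hzq
      simp only [Fork.ι_ofι] at hw₁
      have hwb : w₁ ≫ b = 0 := by
        have h2 : (w₁ ≫ b) ≫ pushout.inr j b = 0 := by
          rw [Category.assoc, ← pushout.condition, ← Category.assoc, hw₁, hz]
        exact zero_of_comp_mono _ h2
      obtain ⟨w₂, hw₂⟩ := KernelFork.IsLimit.lift' hse.fIsKernel w₁ hwb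
      simp only [Fork.ι_ofι] at hw₂
      refine ⟨w₂, ?_⟩
      rw [← Category.assoc, hw₂, hw₁])
  have seqInl : (ShortComplex.mk (a ≫ j) (pushout.inl j b) winl).ShortExact :=
    ShortExact.mk' (ShortComplex.exact_of_f_is_kernel _ hker) hmono hepi
  -- pull back along the section `s`
  have seqH := pullback_shortExact (a ≫ j) (pushout.inl j b) winl seqInl s
  obtain ⟨t, ht⟩ := hA _ _ _ _ seqH
  refine ⟨t ≫ pullback.fst (pushout.inl j b) s, ?_⟩
  have hfq : pullback.fst (pushout.inl j b) s ≫ q = pullback.snd (pushout.inl j b) s := by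
    have h1 : q = pushout.inl j b ≫ pushout.desc q 0 wq :=
      (pushout.inl_desc _ _ _).symm
    rw [h1, ← Category.assoc, pullback.condition, Category.assoc, hs, Category.comp_id]
  rw [Category.assoc, hfq, ht]

/-- `Ext¹(-, W)`-vanishing is closed under extensions. -/
lemma extClosed_left {A Y B W : 𝒜} (a : A ⟶ Y) (b : Y ⟶ B) (w : a ≫ b = 0)
    (hse : (ShortComplex.mk a b w).ShortExact)
    (hA : Ext1Zero A W) (hB : Ext1Zero B W) : Ext1Zero Y W := by
  have w' : b.op ≫ a.op = 0 := by rw [← op_comp, w, op_zero]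
  have hse' : (ShortComplex.mk b.op a.op w').ShortExact := hse.op
  exact ext1Zero_unop (extClosed_right b.op a.op w' hse' (ext1Zero_op hB) (ext1Zero_op hA))

lemma mem_F_of_injective {C F : Set 𝒜} (h : IsCotorsionPair C F) (I : 𝒜) [Injective I] :
    I ∈ F :=
  (h.2 I).2 fun X _ => ext1Zero_of_injective X I

lemma mem_C_of_projective {C F : Set 𝒜} (h : IsCotorsionPair C F) (P : 𝒜) [Projective P] :
    P ∈ C :=
  (h.1 P).2 fun Y _ => ext1Zero_of_projective P Y

lemma F_extClosed {C F : Set 𝒜} (h : IsCotorsionPair C F) {A Y B : 𝒜}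
    (a : A ⟶ Y) (b : Y ⟶ B) (w : a ≫ b = 0) (hse : (ShortComplex.mk a b w).ShortExact)
    (hA : A ∈ F) (hB : B ∈ F) : Y ∈ F :=
  (h.2 Y).2 fun X hX => extClosed_right a b w hse ((h.2 A).1 hA X hX) ((h.2 B).1 hB X hX)

lemma C_extClosed {C F : Set 𝒜} (h : IsCotorsionPair C F) {A Y B : 𝒜}
    (a : A ⟶ Y) (b : Y ⟶ B) (w : a ≫ b = 0) (hse : (ShortComplex.mk a b w).ShortExact)
    (hA : A ∈ C) (hB : B ∈ C) : Y ∈ C :=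
  (h.1 Y).2 fun W hW => extClosed_left a b w hse ((h.1 A).1 hA W hW) ((h.1 B).1 hB W hW)

/-- Salce's trick: right approximations give left approximations. -/
lemma salce_left {C F : Set 𝒜} [EnoughInjectives 𝒜] (h : IsCotorsionPair C F)
    (hr : ∀ X : 𝒜, HasSpecialRightApprox C F X) (X : 𝒜) : HasSpecialLeftApprox C F X := by
  have winj : Injective.ι X ≫ cokernel.π (Injective.ι X) = 0 := cokernel.condition _
  have hseIQ : (ShortComplex.mk (Injective.ι X) (cokernel.π (Injective.ι X)) winj).ShortExact :=
    ShortExact.mk' (ShortComplex.exact_of_g_is_cokernel _ (cokernelIsCokernel _))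
      inferInstance inferInstance
  obtain ⟨Co, Fo, hCo, hFo, i, p, w, hse⟩ := hr (cokernel (Injective.ι X))
  have seq1 := pullback_shortExact i p w hse (cokernel.π (Injective.ι X))
  have seq2 := pullback_shortExact' (Injective.ι X) (cokernel.π (Injective.ι X)) winj hseIQ p
  have hmem : pullback p (cokernel.π (Injective.ι X)) ∈ F :=
    F_extClosed h _ _ _ seq1 hFo (mem_F_of_injective h (Injective.under X))
  exact ⟨Co, pullback p (cokernel.π (Injective.ι X)), hCo, hmem, _, _, _, seq2⟩

/-- Salce's trick: left approximations give right approximations. -/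
lemma salce_right {C F : Set 𝒜} [EnoughProjectives 𝒜] (h : IsCotorsionPair C F)
    (hl : ∀ X : 𝒜, HasSpecialLeftApprox C F X) (X : 𝒜) : HasSpecialRightApprox C F X := by
  have wproj : kernel.ι (Projective.π X) ≫ Projective.π X = 0 := kernel.condition _
  have hseKP : (ShortComplex.mk (kernel.ι (Projective.π X)) (Projective.π X) wproj).ShortExact :=
    ShortExact.mk' (ShortComplex.exact_of_f_is_kernel _ (kernelIsKernel _))
      inferInstance inferInstance
  obtain ⟨Co, Fo, hCo, hFo, i, p, w, hse⟩ := hl (kernel (Projective.π X))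
  have seq1 := pushout_shortExact (kernel.ι (Projective.π X)) (Projective.π X) wproj hseKP i
  have seq2 := pushout_shortExact' i p w hse (kernel.ι (Projective.π X))
  have hmem : pushout (kernel.ι (Projective.π X)) i ∈ C :=
    C_extClosed h _ _ _ seq2 (mem_C_of_projective h (Projective.over X)) hCo
  exact ⟨pushout (kernel.ι (Projective.π X)) i, Fo, hmem, hFo, _, _, _, seq1⟩

end CotorsionAux

/-- In an abelian category with enough projectives and injectives,
a cotorsion pair `(C, F)` is complete iff every object has a special right approximation,
iff every object has a special left approximation. -/
theorem cotorsion_pair_completeness_tfae {𝒜 : Type u} [Category.{v} 𝒜] [Abelian 𝒜]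
    [EnoughProjectives 𝒜] [EnoughInjectives 𝒜]
    (C F : Set 𝒜) (h : IsCotorsionPair C F) :
    (IsCompletePair C F ↔ ∀ X : 𝒜, HasSpecialRightApprox C F X) ∧
    (IsCompletePair C F ↔ ∀ X : 𝒜, HasSpecialLeftApprox C F X) := by
  constructor
  · exact ⟨fun hc X => (hc X).1, fun hr X => ⟨hr X, salce_left h hr X⟩⟩
  · exact ⟨fun hc X => (hc X).2, fun hl X => ⟨salce_right h hl X, hl X⟩⟩
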